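/- Converse for the pinching-antenna channel: let G_k := sup_{v̄ ∈ V} |γ(v̄; w_k)|² (finite since d > 0). Then for every feasible transmission strategy (v,p), the average sum rate satisfies R̄(v,p) ≤ log₂(1 + P·(Σ_{k=1}^K G_k)/(N σ²)). -/

import Mathlib

open MeasureTheory

noncomputable section

/-- Euclidean distance between two points of ℝ³ (represented as `ℝ × ℝ × ℝ`). -/
def dist3 (a b : ℝ × ℝ × ℝ) : ℝ :=
  Real.sqrt ((a.1 - b.1) ^ 2 + (a.2.1 - b.2.1) ^ 2 + (a.2.2 - b.2.2) ^ 2)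

/-- Feasible set of antenna x-coordinates: `0 ≤ v 0`, successive gaps at least `Δ`,
and `v (N-1) ≤ Lmax`. -/
def Vfeas (N : ℕ) (Δ Lmax : ℝ) : Set (Fin N → ℝ) :=
  {v | (∀ i : Fin N, (i : ℕ) = 0 → 0 ≤ v i) ∧
       (∀ i j : Fin N, (j : ℕ) = (i : ℕ) + 1 → Δ ≤ v j - v i) ∧
       (∀ i : Fin N, (i : ℕ) = N - 1 → v i ≤ Lmax)}

/-- Effective channel coefficient `γ(v̄; w)` of the pinching-antenna system, with
`η = λ²/(16π²)`, antenna `n` at `(v n, 0, d)` and feed point at `(-Dx/2, 0, d)`. -/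
def gamma (N : ℕ) (lam lamg d Dx : ℝ) (v : Fin N → ℝ) (w : ℝ × ℝ × ℝ) : ℂ :=
  ∑ n : Fin N,
    Complex.exp (-(Complex.I) * ((2 * Real.pi / lamg * dist3 (v n, 0, d) (-Dx / 2, 0, d) : ℝ) : ℂ)) *
      (((Real.sqrt (lam ^ 2 / (16 * Real.pi ^ 2)) : ℝ) : ℂ) *
        Complex.exp (-(Complex.I) * ((2 * Real.pi / lam * dist3 (v n, 0, d) w : ℝ) : ℂ)) /
        ((dist3 (v n, 0, d) w : ℝ) : ℂ))

/-- Channel power gain `|γ(v̄; w)|²`. -/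
def gain (N : ℕ) (lam lamg d Dx : ℝ) (v : Fin N → ℝ) (w : ℝ × ℝ × ℝ) : ℝ :=
  ‖gamma N lam lamg d Dx v w‖ ^ 2

/-- A feasible transmission strategy: measurable antenna trajectory taking values in the
feasible set, measurable nonnegative powers with per-user average power budget `P`. -/
def Feasible (N K : ℕ) (Δ Lmax T P : ℝ)
    (v : ℝ → Fin N → ℝ) (p : ℝ → Fin K → ℝ) : Prop :=
  Measurable v ∧ Measurable p ∧
  (∀ t ∈ Set.Ioc (0 : ℝ) T, v t ∈ Vfeas N Δ Lmax) ∧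
  (∀ t ∈ Set.Ioc (0 : ℝ) T, ∀ k, 0 ≤ p t k) ∧
  (∀ k, ∫⁻ t in Set.Ioc (0 : ℝ) T, ENNReal.ofReal (p t k) ≤ ENNReal.ofReal (T * P))

/-- Average sum rate of a transmission strategy over the period `(0, T]`. -/
def avgRate (N K : ℕ) (lam lamg d Dx σ2 T : ℝ) (w : Fin K → ℝ × ℝ × ℝ)
    (v : ℝ → Fin N → ℝ) (p : ℝ → Fin K → ℝ) : ℝ :=
  (1 / T) * ∫ t in Set.Ioc (0 : ℝ) T,
    Real.logb 2 (1 + (∑ k, p t k * gain N lam lamg d Dx (v t) (w k)) / (N * σ2))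

end


lemma tangent_log (c x : ℝ) (hc : 0 ≤ c) (hx : 0 ≤ x) :
    Real.logb 2 (1 + x) ≤ Real.logb 2 (1 + c) + (x - c) / ((1 + c) * Real.log 2) := by
  have h2 : (0:ℝ) < Real.log 2 := Real.log_pos one_lt_two
  have hc1 : (0:ℝ) < 1 + c := by linarith
  have hx1 : (0:ℝ) < 1 + x := by linarith
  have key : Real.log (1 + x) ≤ Real.log (1 + c) + (x - c) / (1 + c) := by
    have h := Real.log_le_sub_one_of_pos (show (0:ℝ) < (1 + x) / (1 + c) by positivity)
    rw [Real.log_div hx1.ne' hc1.ne'] at h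
    have he : (1 + x) / (1 + c) - 1 = (x - c) / (1 + c) := by field_simp; ring
    linarith [he ▸ h]
  rw [Real.logb, Real.logb, div_le_iff₀ h2]
  have hrhs : (Real.log (1 + c) / Real.log 2 + (x - c) / ((1 + c) * Real.log 2)) * Real.log 2
      = Real.log (1 + c) + (x - c) / (1 + c) := by
    field_simp
  rw [hrhs]
  exact key

lemma dist3_ge (d : ℝ) (hd : 0 < d) (x : ℝ) (w : ℝ × ℝ × ℝ) (hw : w.2.2 = 0) :
    d ≤ dist3 (x, 0, d) w := by
  have h : d ^ 2 ≤ (x - w.1) ^ 2 + (0 - w.2.1) ^ 2 + (d - w.2.2) ^ 2 := by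
    rw [hw]
    nlinarith [sq_nonneg (x - w.1), sq_nonneg (0 - w.2.1)]
  calc d = Real.sqrt (d ^ 2) := (Real.sqrt_sq hd.le).symm
    _ ≤ _ := Real.sqrt_le_sqrt h

lemma gain_le_bound (N : ℕ) (lam lamg d Dx : ℝ) (hd : 0 < d)
    (vb : Fin N → ℝ) (w : ℝ × ℝ × ℝ) (hw : w.2.2 = 0) :
    gain N lam lamg d Dx vb w
      ≤ ((N : ℝ) * (Real.sqrt (lam ^ 2 / (16 * Real.pi ^ 2)) / d)) ^ 2 := by
  set η := Real.sqrt (lam ^ 2 / (16 * Real.pi ^ 2)) with hη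
  have hη0 : 0 ≤ η := Real.sqrt_nonneg _
  have habs : ‖gamma N lam lamg d Dx vb w‖ ≤ (N : ℝ) * (η / d) := by
    refine le_trans (norm_sum_le _ _) ?_
    have hterm : ∀ n : Fin N,
        ‖Complex.exp (-(Complex.I) * ((2 * Real.pi / lamg * dist3 (vb n, 0, d) (-Dx / 2, 0, d) : ℝ) : ℂ)) *
          (((η : ℝ) : ℂ) *
            Complex.exp (-(Complex.I) * ((2 * Real.pi / lam * dist3 (vb n, 0, d) w : ℝ) : ℂ)) /
            ((dist3 (vb n, 0, d) w : ℝ) : ℂ))‖ ≤ η / d := by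
      intro n
      have hdist : d ≤ dist3 (vb n, 0, d) w := dist3_ge d hd _ w hw
      have hdpos : 0 < dist3 (vb n, 0, d) w := lt_of_lt_of_le hd hdist
      have e1 : ∀ r : ℝ, ‖Complex.exp (-(Complex.I) * (r : ℂ))‖ = 1 := by
        intro r
        rw [Complex.norm_exp]
        simp
      rw [norm_mul, norm_div, norm_mul, e1, e1, Complex.norm_real, Complex.norm_real,
        Real.norm_of_nonneg hη0, Real.norm_of_nonneg hdpos.le, one_mul, mul_one]
      gcongr
    calc (∑ n : Fin N, ‖Complex.exp (-(Complex.I) * ((2 * Real.pi / lamg * dist3 (vb n, 0, d) (-Dx / 2, 0, d) : ℝ) : ℂ)) *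
          (((η : ℝ) : ℂ) *
            Complex.exp (-(Complex.I) * ((2 * Real.pi / lam * dist3 (vb n, 0, d) w : ℝ) : ℂ)) /
            ((dist3 (vb n, 0, d) w : ℝ) : ℂ))‖)
        ≤ ∑ _n : Fin N, η / d := Finset.sum_le_sum fun n _ => hterm n
      _ = (N : ℝ) * (η / d) := by simp [Finset.sum_const, mul_comm]
  have h0 : 0 ≤ ‖gamma N lam lamg d Dx vb w‖ := norm_nonneg _
  rw [gain]
  exact pow_le_pow_left₀ h0 habs 2

lemma Vfeas_mem (N : ℕ) (hN : 1 ≤ N) (Δ Lmax : ℝ) (hΔ : 0 < Δ)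
    (hNL : ((N : ℝ) - 1) * Δ ≤ Lmax) :
    (fun i : Fin N => ((i : ℕ) : ℝ) * Δ) ∈ Vfeas N Δ Lmax := by
  refine ⟨?_, ?_, ?_⟩
  · intro i hi
    show 0 ≤ ((i : ℕ) : ℝ) * Δ
    have h0 : ((i : ℕ) : ℝ) = 0 := by rw [hi]; simp
    rw [h0, zero_mul]
  · intro i j hj
    show Δ ≤ ((j : ℕ) : ℝ) * Δ - ((i : ℕ) : ℝ) * Δ
    have h0 : ((j : ℕ) : ℝ) = ((i : ℕ) : ℝ) + 1 := by rw [hj]; push_cast; ring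
    rw [h0]
    have h1 : (((i : ℕ) : ℝ) + 1) * Δ - ((i : ℕ) : ℝ) * Δ = Δ := by ring
    linarith
  · intro i hi
    show ((i : ℕ) : ℝ) * Δ ≤ Lmax
    have h0 : ((i : ℕ) : ℝ) = (N : ℝ) - 1 := by
      rw [hi, Nat.cast_sub hN]; simp
    rw [h0]
    exact hNL

/-- converse for the pinching-antenna channel.
With `G k` the supremum of the channel power gain of user `k` over the feasible set,
every feasible transmission strategy has average sum rate at most
`log₂(1 + P (∑ k, G k) / (N σ²))`. -/
theorem converse_pinching_MAC
    (N K : ℕ) (hN : 1 ≤ N) (hK : 1 ≤ K)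
    (lam lamg d Dx Δ Lmax T P σ2 : ℝ)
    (hlam : 0 < lam) (hlamg : 0 < lamg) (hd : 0 < d) (hΔ : 0 < Δ)
    (hLmax : 0 < Lmax) (hNL : ((N : ℝ) - 1) * Δ ≤ Lmax)
    (hT : 0 < T) (hP : 0 < P) (hσ : 0 < σ2)
    (w : Fin K → ℝ × ℝ × ℝ) (hw : ∀ k, (w k).2.2 = 0)
    (G : Fin K → ℝ)
    (hG : ∀ k, G k = sSup ((fun vb => gain N lam lamg d Dx vb (w k)) '' Vfeas N Δ Lmax))
    (v : ℝ → Fin N → ℝ) (p : ℝ → Fin K → ℝ)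
    (hfeas : Feasible N K Δ Lmax T P v p) :
    avgRate N K lam lamg d Dx σ2 T w v p
      ≤ Real.logb 2 (1 + P * (∑ k, G k) / (N * σ2)) := by
  classical
  obtain ⟨hvmeas, hpmeas, hvfeas, hpnn, hpbudget⟩ := hfeas
  set μ := MeasureTheory.volume.restrict (Set.Ioc (0:ℝ) T) with hμ
  -- bound on the gains
  set B : ℝ := ((N : ℝ) * (Real.sqrt (lam ^ 2 / (16 * Real.pi ^ 2)) / d)) ^ 2 with hB
  have hbdd : ∀ k, BddAbove ((fun vb => gain N lam lamg d Dx vb (w k)) '' Vfeas N Δ Lmax) := by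
    intro k
    refine ⟨B, ?_⟩
    rintro y ⟨vb, hvb, rfl⟩
    exact gain_le_bound N lam lamg d Dx hd vb (w k) (hw k)
  have hgainle : ∀ k, ∀ vb ∈ Vfeas N Δ Lmax, gain N lam lamg d Dx vb (w k) ≤ G k := by
    intro k vb hvb
    rw [hG k]
    exact le_csSup (hbdd k) ⟨vb, hvb, rfl⟩
  have hv0 : (fun i : Fin N => ((i : ℕ) : ℝ) * Δ) ∈ Vfeas N Δ Lmax :=
    Vfeas_mem N hN Δ Lmax hΔ hNL
  have hGnn : ∀ k, 0 ≤ G k := by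
    intro k
    have h0 : 0 ≤ gain N lam lamg d Dx (fun i : Fin N => ((i : ℕ) : ℝ) * Δ) (w k) := by
      rw [gain]; positivity
    exact le_trans h0 (hgainle k _ hv0)
  -- constants
  set c : ℝ := P * (∑ k, G k) / ((N : ℝ) * σ2) with hc
  have hNσ : (0:ℝ) < (N : ℝ) * σ2 := by
    have : (0:ℝ) < (N : ℝ) := by exact_mod_cast hN
    positivity
  have hcnn : 0 ≤ c := by
    rw [hc]
    have : 0 ≤ ∑ k, G k := Finset.sum_nonneg fun k _ => hGnn k
    positivity
  set A : ℝ := Real.logb 2 (1 + c) with hA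
  have hlog2 : (0:ℝ) < Real.log 2 := Real.log_pos one_lt_two
  set D : ℝ := (1 + c) * Real.log 2 with hD
  have hDpos : 0 < D := by rw [hD]; positivity
  -- integrability of the powers
  have hpk_meas : ∀ k, Measurable fun t => p t k := fun k => (measurable_pi_apply k).comp hpmeas
  have hpk_ae : ∀ k : Fin K, 0 ≤ᵐ[μ] fun t => p t k := by
    intro k
    rw [hμ]
    filter_upwards [MeasureTheory.ae_restrict_mem measurableSet_Ioc] with t ht
    exact hpnn t ht k
  have hpint : ∀ k : Fin K, Integrable (fun t => p t k) μ := by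
    intro k
    refine ⟨(hpk_meas k).aestronglyMeasurable, ?_⟩
    rw [hasFiniteIntegral_iff_ofReal (hpk_ae k)]
    exact lt_of_le_of_lt (hpbudget k) ENNReal.ofReal_lt_top
  have hpk_int_le : ∀ k : Fin K, ∫ t, p t k ∂μ ≤ T * P := by
    intro k
    rw [MeasureTheory.integral_eq_lintegral_of_nonneg_ae (hpk_ae k)
      (hpk_meas k).aestronglyMeasurable]
    calc (∫⁻ t, ENNReal.ofReal (p t k) ∂μ).toReal
        ≤ (ENNReal.ofReal (T * P)).toReal :=
          ENNReal.toReal_mono ENNReal.ofReal_ne_top (hpbudget k)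
      _ = T * P := ENNReal.toReal_ofReal (by positivity)
  -- the dominating function
  set S' : ℝ → ℝ := fun t => (∑ k, p t k * G k) / ((N : ℝ) * σ2) with hS'
  have hS'int : Integrable S' μ := by
    rw [hS']
    exact (MeasureTheory.integrable_finset_sum _ fun k _ =>
      (hpint k).mul_const (G k)).div_const _
  have hS'int_le : ∫ t, S' t ∂μ ≤ T * c := by
    have e1 : ∫ t, S' t ∂μ = (∫ t, (∑ k, p t k * G k) ∂μ) / ((N : ℝ) * σ2) :=
      MeasureTheory.integral_div _ _
    have e2 : ∫ t, (∑ k, p t k * G k) ∂μ = ∑ k, ∫ t, p t k * G k ∂μ :=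
      MeasureTheory.integral_finset_sum _ fun k _ => (hpint k).mul_const (G k)
    have hsum : (∑ k, ∫ t, p t k * G k ∂μ) ≤ ∑ k : Fin K, T * P * G k := by
      refine Finset.sum_le_sum fun k _ => ?_
      rw [MeasureTheory.integral_mul_const]
      exact mul_le_mul_of_nonneg_right (hpk_int_le k) (hGnn k)
    rw [e1, e2]
    have h2 : (∑ k, ∫ t, p t k * G k ∂μ) / ((N : ℝ) * σ2)
        ≤ (∑ k : Fin K, T * P * G k) / ((N : ℝ) * σ2) :=
      (div_le_div_iff_of_pos_right hNσ).mpr hsum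
    refine h2.trans (le_of_eq ?_)
    rw [← Finset.mul_sum, hc]
    field_simp
  set g : ℝ → ℝ := fun t => A + (S' t - c) / D with hg
  have hgint : Integrable g μ := by
    rw [hg]
    have hμfin : μ Set.univ < ⊤ := by
      rw [hμ, Measure.restrict_apply_univ, Real.volume_Ioc]
      exact ENNReal.ofReal_lt_top
    exact (MeasureTheory.integrable_const A).add
      (((hS'int.sub (MeasureTheory.integrable_const c)).div_const D))
  -- pointwise bounds
  set f : ℝ → ℝ := fun t =>
    Real.logb 2 (1 + (∑ k, p t k * gain N lam lamg d Dx (v t) (w k)) / ((N : ℝ) * σ2)) with hf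
  have hfae : ∀ t ∈ Set.Ioc (0:ℝ) T, 0 ≤ f t ∧ f t ≤ g t := by
    intro t ht
    set S : ℝ := (∑ k, p t k * gain N lam lamg d Dx (v t) (w k)) / ((N : ℝ) * σ2) with hS
    have hSnn : 0 ≤ S := by
      rw [hS]
      have : 0 ≤ ∑ k, p t k * gain N lam lamg d Dx (v t) (w k) := by
        refine Finset.sum_nonneg fun k _ => mul_nonneg (hpnn t ht k) ?_
        rw [gain]; positivity
      positivity
    have hSS' : S ≤ S' t := by
      have hsum : (∑ k, p t k * gain N lam lamg d Dx (v t) (w k)) ≤ ∑ k, p t k * G k :=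
        Finset.sum_le_sum fun k _ =>
          mul_le_mul_of_nonneg_left (hgainle k (v t) (hvfeas t ht)) (hpnn t ht k)
      exact (div_le_div_iff_of_pos_right hNσ).mpr hsum
    constructor
    · exact Real.logb_nonneg one_lt_two (by linarith)
    · have h1 : f t ≤ A + (S - c) / D := tangent_log c S hcnn hSnn
      have h2 : A + (S - c) / D ≤ A + (S' t - c) / D := by
        have := (div_le_div_iff_of_pos_right hDpos).mpr (show S - c ≤ S' t - c by linarith)
        linarith
      exact le_trans h1 h2
  have hmono : ∫ t, f t ∂μ ≤ ∫ t, g t ∂μ := by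
    refine MeasureTheory.integral_mono_of_nonneg ?_ hgint ?_
    · rw [hμ]
      filter_upwards [MeasureTheory.ae_restrict_mem measurableSet_Ioc] with t ht
      exact (hfae t ht).1
    · rw [hμ]
      filter_upwards [MeasureTheory.ae_restrict_mem measurableSet_Ioc] with t ht
      exact (hfae t ht).2
  -- compute the integral of g
  have hμT : (μ Set.univ).toReal = T := by
    rw [hμ, Measure.restrict_apply_univ, Real.volume_Ioc]
    rw [ENNReal.toReal_ofReal (by linarith)]
    ring
  have hgval : ∫ t, g t ∂μ = T * A + (∫ t, S' t ∂μ - T * c) / D := by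
    have hint2 : Integrable (fun t => (S' t - c) / D) μ :=
      (hS'int.sub (MeasureTheory.integrable_const c)).div_const D
    have e0 : ∫ t, g t ∂μ = (∫ _t, A ∂μ) + ∫ t, (S' t - c) / D ∂μ :=
      MeasureTheory.integral_add (MeasureTheory.integrable_const A) hint2
    have e1 : ∫ t, (S' t - c) / D ∂μ = (∫ t, (S' t - c) ∂μ) / D :=
      MeasureTheory.integral_div _ _
    have e2 : ∫ t, (S' t - c) ∂μ = (∫ t, S' t ∂μ) - ∫ _t, c ∂μ :=
      MeasureTheory.integral_sub hS'int (MeasureTheory.integrable_const c)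
    rw [e0, e1, e2, MeasureTheory.integral_const, MeasureTheory.integral_const,
      smul_eq_mul, smul_eq_mul, measureReal_def, hμT]
  have hgle : ∫ t, g t ∂μ ≤ T * A := by
    rw [hgval]
    have hnum : ∫ t, S' t ∂μ - T * c ≤ 0 := by linarith [hS'int_le]
    have : (∫ t, S' t ∂μ - T * c) / D ≤ 0 := div_nonpos_of_nonpos_of_nonneg hnum hDpos.le
    linarith
  -- conclude
  have hfinal : ∫ t, f t ∂μ ≤ T * A := le_trans hmono hgle
  rw [avgRate]
  have hgoal : (1 / T) * ∫ t in Set.Ioc (0:ℝ) T,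
      Real.logb 2 (1 + (∑ k, p t k * gain N lam lamg d Dx (v t) (w k)) / ((N : ℝ) * σ2))
      ≤ (1 / T) * (T * A) := by
    apply mul_le_mul_of_nonneg_left _ (by positivity)
    exact hfinal
  calc (1 / T) * ∫ t in Set.Ioc (0:ℝ) T,
        Real.logb 2 (1 + (∑ k, p t k * gain N lam lamg d Dx (v t) (w k)) / ((N : ℝ) * σ2))
      ≤ (1 / T) * (T * A) := hgoal
    _ = A := by field_simp
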